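/- arXiv:1809.01293 — 8 statements merged into one kernel-verified Lean document; each statement's English description precedes it below -/
import Mathlib

section
/- Suppose the M differentiable curves θ_1, …, θ_M : [0,∞) → ℝ^d solve the SVGD flow θ_i′(τ) = b_i(θ_1(τ), …, θ_M(τ)) for all τ ≥ 0, where b_i is the SVGD drift. Then, with λ = m_K − H_F·L_K, for every τ ≥ 0 one has √(Σ_{i,j=1}^M ‖θ_i(τ) − θ_j(τ)‖²) ≤ C_0 · exp(−λτ), where C_0 = √(Σ_{i,j=1}^M ‖θ_i(0) − θ_j(0)‖²). In particular, when λ > 0 the particles of SVGD collapse to a single point as τ → ∞. -/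
open Finset
open scoped InnerProductSpace

/-- Under Assumptions 1.2, 2.1 and 2.2, exact SVGD particles collapse:
the expected particle distance decays as `C₀ · exp (-(m_K - H_F·L_K) τ)`. -/
theorem svgd_particle_collapse
    (d M : ℕ) (hM : 1 ≤ M)
    (K : EuclideanSpace ℝ (Fin d) → ℝ)
    (gradK F : EuclideanSpace ℝ (Fin d) → EuclideanSpace ℝ (Fin d))
    (m_K H_F L_K : ℝ) (hm_K : 0 < m_K)
    (hgradK : ∀ a b : EuclideanSpace ℝ (Fin d),
      ⟪gradK a - gradK b, a - b⟫_ℝ ≤ -m_K * ‖a - b‖ ^ 2)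
    (hK_lip : ∀ a b : EuclideanSpace ℝ (Fin d), |K a - K b| ≤ L_K * ‖a - b‖)
    (hF_bdd : ∀ θ : EuclideanSpace ℝ (Fin d), ‖F θ‖ ≤ H_F)
    (θ : Fin M → ℝ → EuclideanSpace ℝ (Fin d))
    (hθ : ∀ (i : Fin M) (τ : ℝ), 0 ≤ τ →
      HasDerivAt (θ i)
        ((M : ℝ)⁻¹ • ∑ q : Fin M,
          (gradK (θ i τ - θ q τ) - K (θ i τ - θ q τ) • F (θ q τ))) τ)
    (τ : ℝ) (hτ : 0 ≤ τ) :
    Real.sqrt (∑ i : Fin M, ∑ j : Fin M, ‖θ i τ - θ j τ‖ ^ 2) ≤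
      Real.sqrt (∑ i : Fin M, ∑ j : Fin M, ‖θ i 0 - θ j 0‖ ^ 2) *
        Real.exp (-(m_K - H_F * L_K) * τ) := by
  set c : ℝ := m_K - H_F * L_K with hc
  -- the drift of particle i at time t
  set b : Fin M → ℝ → EuclideanSpace ℝ (Fin d) := fun i t =>
    (M : ℝ)⁻¹ • ∑ q : Fin M,
      (gradK (θ i t - θ q t) - K (θ i t - θ q t) • F (θ q t)) with hb
  -- the squared dispersion
  set V : ℝ → ℝ := fun t => ∑ i : Fin M, ∑ j : Fin M, ‖θ i t - θ j t‖ ^ 2 with hV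
  have hVnonneg : ∀ t, 0 ≤ V t := fun t =>
    Finset.sum_nonneg fun i _ => Finset.sum_nonneg fun j _ => by positivity
  -- key drift inequality
  have key : ∀ (i j : Fin M) (t : ℝ),
      ⟪b i t - b j t, θ i t - θ j t⟫_ℝ ≤ -c * ‖θ i t - θ j t‖ ^ 2 := by
    intro i j t
    set x : EuclideanSpace ℝ (Fin d) := θ i t - θ j t with hx
    have hbij : b i t - b j t = (M : ℝ)⁻¹ • ∑ q : Fin M,
        ((gradK (θ i t - θ q t) - gradK (θ j t - θ q t)) -
          (K (θ i t - θ q t) - K (θ j t - θ q t)) • F (θ q t)) := by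
      rw [hb]
      simp only [← smul_sub, ← Finset.sum_sub_distrib]
      congr 1
      refine Finset.sum_congr rfl fun q _ => ?_
      rw [sub_smul]
      abel
    have hterm : ∀ q : Fin M,
        ⟪(gradK (θ i t - θ q t) - gradK (θ j t - θ q t)) -
          (K (θ i t - θ q t) - K (θ j t - θ q t)) • F (θ q t), x⟫_ℝ ≤
          (-m_K + H_F * L_K) * ‖x‖ ^ 2 := by
      intro q
      rw [inner_sub_left]
      have hdiff : (θ i t - θ q t) - (θ j t - θ q t) = x := by rw [hx]; abel
      have h1 : ⟪gradK (θ i t - θ q t) - gradK (θ j t - θ q t), x⟫_ℝ ≤ -m_K * ‖x‖ ^ 2 := by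
        have := hgradK (θ i t - θ q t) (θ j t - θ q t)
        rwa [hdiff] at this
      have h2 : -⟪(K (θ i t - θ q t) - K (θ j t - θ q t)) • F (θ q t), x⟫_ℝ ≤
          (L_K * ‖x‖) * (H_F * ‖x‖) := by
        have habs : -⟪(K (θ i t - θ q t) - K (θ j t - θ q t)) • F (θ q t), x⟫_ℝ ≤
            ‖(K (θ i t - θ q t) - K (θ j t - θ q t)) • F (θ q t)‖ * ‖x‖ := by
          calc -⟪(K (θ i t - θ q t) - K (θ j t - θ q t)) • F (θ q t), x⟫_ℝ
              ≤ |⟪(K (θ i t - θ q t) - K (θ j t - θ q t)) • F (θ q t), x⟫_ℝ| :=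
                neg_le_abs _
            _ ≤ _ := abs_real_inner_le_norm _ _
        refine habs.trans ?_
        rw [norm_smul]
        have hKle : ‖K (θ i t - θ q t) - K (θ j t - θ q t)‖ ≤ L_K * ‖x‖ := by
          have := hK_lip (θ i t - θ q t) (θ j t - θ q t)
          rw [hdiff] at this
          rwa [Real.norm_eq_abs]
        have hFle : ‖F (θ q t)‖ ≤ H_F := hF_bdd _
        have h0 : (0:ℝ) ≤ L_K * ‖x‖ := le_trans (norm_nonneg _) hKle
        calc ‖K (θ i t - θ q t) - K (θ j t - θ q t)‖ * ‖F (θ q t)‖ * ‖x‖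
            ≤ (L_K * ‖x‖) * H_F * ‖x‖ :=
              mul_le_mul_of_nonneg_right
                (mul_le_mul hKle hFle (norm_nonneg _) h0) (norm_nonneg _)
          _ = (L_K * ‖x‖) * (H_F * ‖x‖) := by ring
      nlinarith [sq_nonneg ‖x‖]
    rw [hbij, inner_smul_left, sum_inner]
    have hsum : ∑ q : Fin M,
        ⟪(gradK (θ i t - θ q t) - gradK (θ j t - θ q t)) -
          (K (θ i t - θ q t) - K (θ j t - θ q t)) • F (θ q t), x⟫_ℝ ≤
        (M : ℝ) * ((-m_K + H_F * L_K) * ‖x‖ ^ 2) := by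
      calc _ ≤ ∑ _q : Fin M, (-m_K + H_F * L_K) * ‖x‖ ^ 2 :=
            Finset.sum_le_sum fun q _ => hterm q
        _ = (M : ℝ) * ((-m_K + H_F * L_K) * ‖x‖ ^ 2) := by
            rw [Finset.sum_const, Finset.card_univ, Fintype.card_fin, nsmul_eq_mul]
    have hMpos : (0:ℝ) < M := by exact_mod_cast hM
    have := mul_le_mul_of_nonneg_left hsum (inv_nonneg.mpr hMpos.le)
    calc (starRingEnd ℝ) (M : ℝ)⁻¹ * ∑ q : Fin M, ⟪_, x⟫_ℝ
        = (M : ℝ)⁻¹ * ∑ q : Fin M, ⟪(gradK (θ i t - θ q t) - gradK (θ j t - θ q t)) -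
          (K (θ i t - θ q t) - K (θ j t - θ q t)) • F (θ q t), x⟫_ℝ := by
          simp [starRingEnd_apply]
      _ ≤ (M : ℝ)⁻¹ * ((M : ℝ) * ((-m_K + H_F * L_K) * ‖x‖ ^ 2)) := this
      _ = -c * ‖x‖ ^ 2 := by
          field_simp
          ring
  -- derivative of V
  have hVderiv : ∀ t : ℝ, 0 ≤ t → HasDerivAt V
      (∑ i : Fin M, ∑ j : Fin M, 2 * ⟪b i t - b j t, θ i t - θ j t⟫_ℝ) t := by
    intro t ht
    have hij : ∀ i j : Fin M, HasDerivAt (fun s => ‖θ i s - θ j s‖ ^ 2)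
        (2 * ⟪b i t - b j t, θ i t - θ j t⟫_ℝ) t := by
      intro i j
      have hd : HasDerivAt (fun s => θ i s - θ j s) (b i t - b j t) t :=
        (hθ i t ht).sub (hθ j t ht)
      have := hd.inner ℝ hd
      have heq : (fun s => ⟪θ i s - θ j s, θ i s - θ j s⟫_ℝ) =
          fun s => ‖θ i s - θ j s‖ ^ 2 := by
        funext s; exact real_inner_self_eq_norm_sq _
      rw [heq] at this
      refine HasDerivAt.congr_deriv this ?_
      rw [real_inner_comm (θ i t - θ j t) (b i t - b j t)]
      ring
    exact HasDerivAt.fun_sum fun i _ => HasDerivAt.fun_sum fun j _ => hij i j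
  -- the auxiliary function g
  set g : ℝ → ℝ := fun t => V t * Real.exp (2 * c * t) with hg
  have hgderiv : ∀ t : ℝ, 0 ≤ t → HasDerivAt g
      ((∑ i : Fin M, ∑ j : Fin M, 2 * ⟪b i t - b j t, θ i t - θ j t⟫_ℝ) *
        Real.exp (2 * c * t) + V t * (Real.exp (2 * c * t) * (2 * c))) t := by
    intro t ht
    have hexp : HasDerivAt (fun s => Real.exp (2 * c * s)) (Real.exp (2 * c * t) * (2 * c)) t := by
      have : HasDerivAt (fun s : ℝ => 2 * c * s) (2 * c) t := by
        simpa using (hasDerivAt_id t).const_mul (2 * c)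
      exact this.exp
    exact (hVderiv t ht).mul hexp
  have hgderiv_nonpos : ∀ t : ℝ, 0 ≤ t →
      (∑ i : Fin M, ∑ j : Fin M, 2 * ⟪b i t - b j t, θ i t - θ j t⟫_ℝ) *
        Real.exp (2 * c * t) + V t * (Real.exp (2 * c * t) * (2 * c)) ≤ 0 := by
    intro t ht
    have hsum : (∑ i : Fin M, ∑ j : Fin M, 2 * ⟪b i t - b j t, θ i t - θ j t⟫_ℝ) ≤
        -2 * c * V t := by
      rw [hV]
      rw [Finset.mul_sum]
      refine Finset.sum_le_sum fun i _ => ?_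
      rw [Finset.mul_sum]
      refine Finset.sum_le_sum fun j _ => ?_
      have := key i j t
      nlinarith
    have hexppos : (0:ℝ) < Real.exp (2 * c * t) := Real.exp_pos _
    nlinarith [mul_le_mul_of_nonneg_right hsum hexppos.le]
  -- g is antitone on [0, ∞)
  have hanti : AntitoneOn g (Set.Ici (0:ℝ)) := by
    apply antitoneOn_of_deriv_nonpos (convex_Ici 0)
    · intro t ht
      exact ((hgderiv t ht).continuousAt).continuousWithinAt
    · intro t ht
      rw [interior_Ici] at ht
      exact ((hgderiv t (le_of_lt ht)).differentiableAt).differentiableWithinAt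
    · intro t ht
      rw [interior_Ici] at ht
      rw [(hgderiv t (le_of_lt ht)).deriv]
      exact hgderiv_nonpos t (le_of_lt ht)
  have hg0 : g τ ≤ g 0 := hanti Set.self_mem_Ici hτ hτ
  have hVle : V τ ≤ V 0 * Real.exp (-(2 * c) * τ) := by
    have hg0' : V τ * Real.exp (2 * c * τ) ≤ V 0 := by
      rw [hg] at hg0
      simpa using hg0
    have := mul_le_mul_of_nonneg_right hg0' (Real.exp_nonneg (-(2 * c) * τ))
    rwa [mul_assoc, ← Real.exp_add, show 2 * c * τ + -(2 * c) * τ = 0 by ring,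
      Real.exp_zero, mul_one] at this
  calc Real.sqrt (V τ) ≤ Real.sqrt (V 0 * Real.exp (-(2 * c) * τ)) :=
        Real.sqrt_le_sqrt hVle
    _ = Real.sqrt (V 0) * Real.exp (-c * τ) := by
        rw [Real.sqrt_mul (hVnonneg 0)]
        congr 1
        rw [show -(2 * c) * τ = (-c * τ) + (-c * τ) by ring, Real.exp_add, ← sq,
          Real.sqrt_sq (Real.exp_nonneg _)]
end

section
/- For any configuration θ_1, …, θ_M ∈ ℝ^d, the SVGD drift satisfies the dissipation inequality Σ_{i,j=1}^M ⟨b_i − b_j, θ_i − θ_j⟩ ≤ −(m_K − H_F·L_K) Σ_{i,j=1}^M ‖θ_i − θ_j‖². -/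
open Finset
open scoped InnerProductSpace

/-- the SVGD drift satisfies the dissipation inequality
`Σ_{i,j} ⟨b_i − b_j, θ_i − θ_j⟩ ≤ −(m_K − H_F·L_K) Σ_{i,j} ‖θ_i − θ_j‖²`. -/
theorem svgd_drift_dissipation
    (d M : ℕ) (hM : 1 ≤ M)
    (K : EuclideanSpace ℝ (Fin d) → ℝ)
    (gradK F : EuclideanSpace ℝ (Fin d) → EuclideanSpace ℝ (Fin d))
    (m_K H_F L_K : ℝ) (hm_K : 0 < m_K)
    (hgradK : ∀ a b : EuclideanSpace ℝ (Fin d),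
      ⟪gradK a - gradK b, a - b⟫_ℝ ≤ -m_K * ‖a - b‖ ^ 2)
    (hK_lip : ∀ a b : EuclideanSpace ℝ (Fin d), |K a - K b| ≤ L_K * ‖a - b‖)
    (hF_bdd : ∀ θ : EuclideanSpace ℝ (Fin d), ‖F θ‖ ≤ H_F)
    (θ : Fin M → EuclideanSpace ℝ (Fin d)) :
    ∑ i : Fin M, ∑ j : Fin M,
      ⟪((M : ℝ)⁻¹ • ∑ q : Fin M, (gradK (θ i - θ q) - K (θ i - θ q) • F (θ q))) -
        ((M : ℝ)⁻¹ • ∑ q : Fin M, (gradK (θ j - θ q) - K (θ j - θ q) • F (θ q))),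
        θ i - θ j⟫_ℝ
      ≤ -(m_K - H_F * L_K) * ∑ i : Fin M, ∑ j : Fin M, ‖θ i - θ j‖ ^ 2 := by
  have hMpos : (0:ℝ) < M := by exact_mod_cast Nat.lt_of_lt_of_le Nat.zero_lt_one hM
  have key : ∀ i j : Fin M,
      ⟪((M : ℝ)⁻¹ • ∑ q : Fin M, (gradK (θ i - θ q) - K (θ i - θ q) • F (θ q))) -
        ((M : ℝ)⁻¹ • ∑ q : Fin M, (gradK (θ j - θ q) - K (θ j - θ q) • F (θ q))),
        θ i - θ j⟫_ℝ ≤ -(m_K - H_F * L_K) * ‖θ i - θ j‖ ^ 2 := by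
    intro i j
    set Δ := θ i - θ j with hΔ
    have term : ∀ q : Fin M,
        ⟪(gradK (θ i - θ q) - K (θ i - θ q) • F (θ q)) -
          (gradK (θ j - θ q) - K (θ j - θ q) • F (θ q)), Δ⟫_ℝ
        ≤ -(m_K - H_F * L_K) * ‖Δ‖ ^ 2 := by
      intro q
      have hab : (θ i - θ q) - (θ j - θ q) = Δ := by rw [hΔ]; abel
      have h1 : ⟪gradK (θ i - θ q) - gradK (θ j - θ q), Δ⟫_ℝ ≤ -m_K * ‖Δ‖ ^ 2 := by
        have := hgradK (θ i - θ q) (θ j - θ q)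
        rwa [hab] at this
      have h2 : |K (θ i - θ q) - K (θ j - θ q)| ≤ L_K * ‖Δ‖ := by
        have := hK_lip (θ i - θ q) (θ j - θ q)
        rwa [hab] at this
      have hC : |⟪F (θ q), Δ⟫_ℝ| ≤ H_F * ‖Δ‖ := by
        refine le_trans (abs_real_inner_le_norm _ _) ?_
        exact mul_le_mul_of_nonneg_right (hF_bdd _) (norm_nonneg _)
      have h3 : -((K (θ i - θ q) - K (θ j - θ q)) * ⟪F (θ q), Δ⟫_ℝ)
          ≤ H_F * L_K * ‖Δ‖ ^ 2 := by
        have habs : |(K (θ i - θ q) - K (θ j - θ q)) * ⟪F (θ q), Δ⟫_ℝ|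
            ≤ (L_K * ‖Δ‖) * (H_F * ‖Δ‖) := by
          rw [abs_mul]
          exact mul_le_mul h2 hC (abs_nonneg _) (le_trans (abs_nonneg _) h2)
        have := neg_abs_le ((K (θ i - θ q) - K (θ j - θ q)) * ⟪F (θ q), Δ⟫_ℝ)
        nlinarith [habs]
      have veq : (gradK (θ i - θ q) - K (θ i - θ q) • F (θ q)) -
          (gradK (θ j - θ q) - K (θ j - θ q) • F (θ q)) =
          (gradK (θ i - θ q) - gradK (θ j - θ q)) -
          (K (θ i - θ q) - K (θ j - θ q)) • F (θ q) := by
        rw [sub_smul]; abel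
      rw [veq, inner_sub_left, real_inner_smul_left]
      nlinarith [h1, h3]
    have hsum : ∑ q : Fin M,
        ⟪(gradK (θ i - θ q) - K (θ i - θ q) • F (θ q)) -
          (gradK (θ j - θ q) - K (θ j - θ q) • F (θ q)), Δ⟫_ℝ
        ≤ (M : ℝ) * (-(m_K - H_F * L_K) * ‖Δ‖ ^ 2) := by
      calc ∑ q : Fin M, ⟪(gradK (θ i - θ q) - K (θ i - θ q) • F (θ q)) -
          (gradK (θ j - θ q) - K (θ j - θ q) • F (θ q)), Δ⟫_ℝ
          ≤ ∑ _q : Fin M, (-(m_K - H_F * L_K) * ‖Δ‖ ^ 2) :=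
            Finset.sum_le_sum (fun q _ => term q)
        _ = (M : ℝ) * (-(m_K - H_F * L_K) * ‖Δ‖ ^ 2) := by
            simp [Finset.sum_const, Finset.card_univ, mul_comm]
    rw [← smul_sub, ← Finset.sum_sub_distrib, real_inner_smul_left]
    rw [sum_inner]
    calc (M : ℝ)⁻¹ * ∑ q : Fin M,
          ⟪(gradK (θ i - θ q) - K (θ i - θ q) • F (θ q)) -
            (gradK (θ j - θ q) - K (θ j - θ q) • F (θ q)), Δ⟫_ℝ
        ≤ (M : ℝ)⁻¹ * ((M : ℝ) * (-(m_K - H_F * L_K) * ‖Δ‖ ^ 2)) :=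
          mul_le_mul_of_nonneg_left hsum (inv_nonneg.mpr hMpos.le)
      _ = -(m_K - H_F * L_K) * ‖Δ‖ ^ 2 := by
          field_simp
  calc ∑ i : Fin M, ∑ j : Fin M,
        ⟪((M : ℝ)⁻¹ • ∑ q : Fin M, (gradK (θ i - θ q) - K (θ i - θ q) • F (θ q))) -
          ((M : ℝ)⁻¹ • ∑ q : Fin M, (gradK (θ j - θ q) - K (θ j - θ q) • F (θ q))),
          θ i - θ j⟫_ℝ
      ≤ ∑ i : Fin M, ∑ j : Fin M, -(m_K - H_F * L_K) * ‖θ i - θ j‖ ^ 2 :=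
        Finset.sum_le_sum (fun i _ => Finset.sum_le_sum (fun j _ => key i j))
    _ = -(m_K - H_F * L_K) * ∑ i : Fin M, ∑ j : Fin M, ‖θ i - θ j‖ ^ 2 := by
        simp [Finset.mul_sum]
end

section
/- Let λ > 0 and c ≥ 0, and let v : ℝ → ℝ be differentiable with v(τ) > 0 for all τ ≥ 0 and v′(τ) ≤ −2λ·v(τ) + c·√(v(τ)) for all τ ≥ 0. Then for all τ ≥ 0, √(v(τ)) ≤ (√(v(0)) − c/(2λ))·exp(−λτ) + c/(2λ). -/
/-- square-root differential comparison (Gronwall-type) inequality.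
If `v > 0` on `[0,∞)` and `v′ ≤ −2λ v + c √v` there, then
`√(v τ) ≤ (√(v 0) − c/(2λ)) exp(−λτ) + c/(2λ)` for all `τ ≥ 0`. -/
theorem sqrt_gronwall_comparison
    (lam c : ℝ) (hlam : 0 < lam) (hc : 0 ≤ c)
    (v : ℝ → ℝ) (hv : Differentiable ℝ v)
    (hpos : ∀ τ : ℝ, 0 ≤ τ → 0 < v τ)
    (hineq : ∀ τ : ℝ, 0 ≤ τ →
      deriv v τ ≤ -2 * lam * v τ + c * Real.sqrt (v τ))
    (τ : ℝ) (hτ : 0 ≤ τ) :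
    Real.sqrt (v τ) ≤
      (Real.sqrt (v 0) - c / (2 * lam)) * Real.exp (-lam * τ) + c / (2 * lam) := by
  set u : ℝ → ℝ := fun x => Real.sqrt (v x) with hu
  set u' : ℝ → ℝ := fun x => deriv v x / (2 * Real.sqrt (v x)) with hu'
  have hderiv : ∀ x ∈ Set.Ico (0:ℝ) τ, HasDerivWithinAt u (u' x) (Set.Ici x) x := by
    intro x hx
    have hvx : 0 < v x := hpos x hx.1
    have h1 : HasDerivAt v (deriv v x) x := (hv x).hasDerivAt
    have h2 := (Real.hasDerivAt_sqrt hvx.ne').comp x h1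
    have h3 : HasDerivAt u (deriv v x / (2 * Real.sqrt (v x))) x := by
      rw [show deriv v x / (2 * Real.sqrt (v x))
          = 1 / (2 * Real.sqrt (v x)) * deriv v x by ring]
      exact h2
    exact h3.hasDerivWithinAt
  have hbound : ∀ x ∈ Set.Ico (0:ℝ) τ, u' x ≤ -lam * u x + c / 2 := by
    intro x hx
    have hvx : 0 < v x := hpos x hx.1
    have hs : 0 < Real.sqrt (v x) := Real.sqrt_pos.2 hvx
    rw [hu', div_le_iff₀ (by positivity)]
    have := hineq x hx.1
    calc deriv v x ≤ -2 * lam * v x + c * Real.sqrt (v x) := this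
      _ = (-lam * Real.sqrt (v x) + c / 2) * (2 * Real.sqrt (v x)) := by
          have : Real.sqrt (v x) * Real.sqrt (v x) = v x := Real.mul_self_sqrt hvx.le
          ring_nf
          nlinarith [this]
  have hcont : ContinuousOn u (Set.Icc 0 τ) := by
    exact (Real.continuous_sqrt.comp hv.continuous).continuousOn
  have key := le_gronwallBound_of_liminf_deriv_right_le hcont
    (fun x hx r hr => (hderiv x hx).liminf_right_slope_le hr)
    (le_refl (u 0)) hbound τ (Set.mem_Icc.2 ⟨hτ, le_refl τ⟩)
  rw [gronwallBound_of_K_ne_0 (neg_ne_zero.2 hlam.ne')] at key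
  simp only [sub_zero] at key
  have : u 0 * Real.exp (-lam * τ) + c / 2 / -lam * (Real.exp (-lam * τ) - 1)
      = (u 0 - c / (2 * lam)) * Real.exp (-lam * τ) + c / (2 * lam) := by
    field_simp
    ring
  linarith [key, this.symm.le, this.le]
end

section
/- Let μ^Θ and ρ^Θ be probability measures on (ℝ^d)^M such that, for every i, the pushforward of μ^Θ under the i-th coordinate projection Θ ↦ Θ_i equals μ and the pushforward of ρ^Θ under Θ ↦ Θ_i equals ρ. Let g : ℝ^d → ℝ be 1-Lipschitz and integrable with respect to both μ and ρ, and suppose g_Θ is integrable with respect to both μ^Θ and ρ^Θ. Then g_Θ is 1-Lipschitz with respect to the ℓ² product norm on (ℝ^d)^M, and ∫ g dμ − ∫ g dρ = (1/√M)·(∫ g_Θ dμ^Θ − ∫ g_Θ dρ^Θ). In particular |∫ g dμ − ∫ g dρ| ≤ (1/√M)·|∫ g_Θ dμ^Θ − ∫ g_Θ dρ^Θ|, which yields W_1(μ, ρ) ≤ (1/√M)·W_1(μ^Θ, ρ^Θ). -/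
open MeasureTheory Finset

/-- The particle configuration space `(ℝ^d)^M` with the ℓ² product norm. -/
abbrev ParticleSpace (d M : ℕ) :=
  PiLp 2 fun _ : Fin M => EuclideanSpace ℝ (Fin d)

noncomputable instance (d M : ℕ) : MeasurableSpace (ParticleSpace d M) :=
  MeasurableSpace.comap WithLp.ofLp MeasurableSpace.pi

/-- The lifted test function `g_Θ(Θ) = (1/√M) Σ_i g(Θ_i)`. -/
noncomputable def liftedTest (d M : ℕ) (g : EuclideanSpace ℝ (Fin d) → ℝ)
    (Θ : ParticleSpace d M) : ℝ :=
  (Real.sqrt M)⁻¹ * ∑ i : Fin M, g (Θ i)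

/-- if all coordinate marginals of `μ^Θ` are `μ` and of `ρ^Θ` are `ρ`,
then for a 1-Lipschitz integrable `g`, the lift `g_Θ` is 1-Lipschitz (in the ℓ²
product norm) and `∫ g dμ − ∫ g dρ = (1/√M)(∫ g_Θ dμ^Θ − ∫ g_Θ dρ^Θ)`; in
particular `|∫ g dμ − ∫ g dρ| ≤ (1/√M)|∫ g_Θ dμ^Θ − ∫ g_Θ dρ^Θ|`. -/
theorem wasserstein_particle_lift
    (d M : ℕ) (hM : 1 ≤ M)
    (μ ρ : Measure (EuclideanSpace ℝ (Fin d)))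
    (μΘ ρΘ : Measure (ParticleSpace d M))
    [IsProbabilityMeasure μ] [IsProbabilityMeasure ρ]
    [IsProbabilityMeasure μΘ] [IsProbabilityMeasure ρΘ]
    (hμ : ∀ i : Fin M, Measure.map (fun Θ : ParticleSpace d M => Θ i) μΘ = μ)
    (hρ : ∀ i : Fin M, Measure.map (fun Θ : ParticleSpace d M => Θ i) ρΘ = ρ)
    (g : EuclideanSpace ℝ (Fin d) → ℝ) (hg : LipschitzWith 1 g)
    (hgμ : Integrable g μ) (hgρ : Integrable g ρ)
    (hgΘμ : Integrable (liftedTest d M g) μΘ)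
    (hgΘρ : Integrable (liftedTest d M g) ρΘ) :
    LipschitzWith 1 (liftedTest d M g) ∧
      (∫ x, g x ∂μ) - (∫ x, g x ∂ρ) =
        (Real.sqrt M)⁻¹ *
          ((∫ Θ, liftedTest d M g Θ ∂μΘ) - ∫ Θ, liftedTest d M g Θ ∂ρΘ) ∧
      |(∫ x, g x ∂μ) - ∫ x, g x ∂ρ| ≤
        (Real.sqrt M)⁻¹ *
          |(∫ Θ, liftedTest d M g Θ ∂μΘ) - ∫ Θ, liftedTest d M g Θ ∂ρΘ| := by
  have hMpos : (0:ℝ) < M := by exact_mod_cast hM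
  have hsqrt : (0:ℝ) < Real.sqrt M := Real.sqrt_pos.mpr hMpos
  -- Lipschitz part
  have hlip : LipschitzWith 1 (liftedTest d M g) := by
    refine LipschitzWith.of_dist_le_mul fun x y => ?_
    simp only [NNReal.coe_one, one_mul]
    have h1 : dist (liftedTest d M g x) (liftedTest d M g y)
        ≤ (Real.sqrt M)⁻¹ * ∑ i : Fin M, dist (x i) (y i) := by
      rw [liftedTest, liftedTest, Real.dist_eq, ← mul_sub, abs_mul,
        abs_of_nonneg (by positivity), ← Finset.sum_sub_distrib]
      gcongr
      calc |∑ i : Fin M, (g (x i) - g (y i))| ≤ ∑ i : Fin M, |g (x i) - g (y i)| :=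
            Finset.abs_sum_le_sum_abs _ _
        _ ≤ ∑ i : Fin M, dist (x i) (y i) := by
            apply Finset.sum_le_sum
            intro i _
            have := hg.dist_le_mul (x i) (y i)
            simpa [Real.dist_eq] using this
    have h2 : ∑ i : Fin M, dist (x i) (y i)
        ≤ Real.sqrt M * Real.sqrt (∑ i : Fin M, dist (x i) (y i) ^ 2) := by
      rw [← Real.sqrt_mul (le_of_lt hMpos)]
      apply Real.le_sqrt_of_sq_le
      calc (∑ i : Fin M, dist (x i) (y i)) ^ 2
          ≤ (Finset.univ.card : ℝ) * ∑ i : Fin M, dist (x i) (y i) ^ 2 := by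
            exact sq_sum_le_card_mul_sum_sq
        _ = (M : ℝ) * ∑ i : Fin M, dist (x i) (y i) ^ 2 := by
            rw [Finset.card_univ, Fintype.card_fin]
    calc dist (liftedTest d M g x) (liftedTest d M g y)
        ≤ (Real.sqrt M)⁻¹ * ∑ i : Fin M, dist (x i) (y i) := h1
      _ ≤ (Real.sqrt M)⁻¹ * (Real.sqrt M * Real.sqrt (∑ i : Fin M, dist (x i) (y i) ^ 2)) := by
          gcongr
      _ = Real.sqrt (∑ i : Fin M, dist (x i) (y i) ^ 2) := by
          field_simp
      _ = dist x y := (PiLp.dist_eq_of_L2 x y).symm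
  -- integrability of coordinates
  have hmeasg : Measurable g := hg.continuous.measurable
  have hmeasproj : ∀ i : Fin M, Measurable (fun Θ : ParticleSpace d M => Θ i) :=
    fun i => (measurable_pi_apply i).comp (comap_measurable _)
  have hintμ : ∀ i : Fin M, Integrable (fun Θ : ParticleSpace d M => g (Θ i)) μΘ := by
    intro i
    have : Integrable g (Measure.map (fun Θ : ParticleSpace d M => Θ i) μΘ) := by
      rw [hμ i]; exact hgμ
    exact (integrable_map_measure hmeasg.aestronglyMeasurable
      (hmeasproj i).aemeasurable).mp this
  have hintρ : ∀ i : Fin M, Integrable (fun Θ : ParticleSpace d M => g (Θ i)) ρΘ := by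
    intro i
    have : Integrable g (Measure.map (fun Θ : ParticleSpace d M => Θ i) ρΘ) := by
      rw [hρ i]; exact hgρ
    exact (integrable_map_measure hmeasg.aestronglyMeasurable
      (hmeasproj i).aemeasurable).mp this
  -- integral computation
  have key : ∀ (ν : Measure (ParticleSpace d M)) (ν₀ : Measure (EuclideanSpace ℝ (Fin d))),
      (∀ i : Fin M, Measure.map (fun Θ : ParticleSpace d M => Θ i) ν = ν₀) →
      (∀ i : Fin M, Integrable (fun Θ : ParticleSpace d M => g (Θ i)) ν) →
      ∫ Θ, liftedTest d M g Θ ∂ν = Real.sqrt M * ∫ x, g x ∂ν₀ := by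
    intro ν ν₀ hmap hint
    calc ∫ Θ, liftedTest d M g Θ ∂ν
        = (Real.sqrt M)⁻¹ * ∫ Θ, (∑ i : Fin M, g (Θ i)) ∂ν := by
          rw [← integral_const_mul]; rfl
      _ = (Real.sqrt M)⁻¹ * ∑ i : Fin M, ∫ Θ, g (Θ i) ∂ν := by
          rw [integral_finset_sum _ (fun i _ => hint i)]
      _ = (Real.sqrt M)⁻¹ * ∑ i : Fin M, ∫ x, g x ∂ν₀ := by
          congr 1
          apply Finset.sum_congr rfl
          intro i _
          rw [← hmap i, integral_map (hmeasproj i).aemeasurable]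
          exact hmeasg.aestronglyMeasurable
      _ = (Real.sqrt M)⁻¹ * (M * ∫ x, g x ∂ν₀) := by
          rw [Finset.sum_const]; simp [mul_comm]
      _ = Real.sqrt M * ∫ x, g x ∂ν₀ := by
          rw [show ((M:ℝ) * ∫ x, g x ∂ν₀) = Real.sqrt M * (Real.sqrt M * ∫ x, g x ∂ν₀) by
            rw [← mul_assoc, Real.mul_self_sqrt (le_of_lt hMpos)]]
          rw [← mul_assoc, inv_mul_cancel₀ (ne_of_gt hsqrt), one_mul]
  have keyμ := key μΘ μ hμ hintμ
  have keyρ := key ρΘ ρ hρ hintρ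
  have heq : (∫ x, g x ∂μ) - (∫ x, g x ∂ρ) =
      (Real.sqrt M)⁻¹ *
        ((∫ Θ, liftedTest d M g Θ ∂μΘ) - ∫ Θ, liftedTest d M g Θ ∂ρΘ) := by
    rw [keyμ, keyρ, ← mul_sub, ← mul_assoc, inv_mul_cancel₀ (ne_of_gt hsqrt), one_mul]
  refine ⟨hlip, heq, ?_⟩
  rw [heq, abs_mul, abs_of_nonneg (by positivity)]
end

section
/- Assume F is L_F-Lipschitz, F(0) = 0, and F is dissipative: ⟨F(θ), θ⟩ ≥ m‖θ‖² − b for some m, b > 0 and all θ ∈ ℝ^d. Then the concatenated SPOS drift satisfies ⟨F_Θ(Θ), Θ⟩ ≥ (β⁻¹·m − L_F − 4/η²)·‖Θ‖² − β⁻¹·M·b for every Θ ∈ (ℝ^d)^M, where ⟨F_Θ(Θ), Θ⟩ = Σ_{i=1}^M ⟨(F_Θ(Θ))_i, θ_i⟩. -/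
open Finset
open scoped InnerProductSpace

private lemma kmul_ge_aux (K x B : ℝ) (hK0 : 0 ≤ K) (hK1 : K ≤ 1) (hx : |x| ≤ B) :
    -B ≤ K * x := by
  nlinarith [mul_nonneg hK0 (by linarith [neg_abs_le x] : (0:ℝ) ≤ x + |x|),
    mul_nonneg (by linarith : (0:ℝ) ≤ 1 - K) (abs_nonneg x), abs_nonneg x]

private lemma kmul_le_aux (K x B : ℝ) (hK0 : 0 ≤ K) (hK1 : K ≤ 1) (hx : |x| ≤ B) :
    K * x ≤ B := by
  have := kmul_ge_aux K (-x) B hK0 hK1 (by simpa using hx)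
  linarith

/-- Lemma E.2, dissipativity part: if `F` is `L_F`-Lipschitz with
`F 0 = 0` and dissipative (`⟨F θ, θ⟩ ≥ m‖θ‖² − b`), then the concatenated SPOS
drift with the Gaussian kernel `K(θ) = exp(−‖θ‖²/η²)` (whose gradient is
`∇K(θ) = −(2/η²) exp(−‖θ‖²/η²) θ`) satisfies
`⟨F_Θ(Θ), Θ⟩ ≥ (β⁻¹ m − L_F − 4/η²)‖Θ‖² − β⁻¹ M b`. -/
theorem spos_concatenated_drift_dissipative
    (d M : ℕ) (hd : 1 ≤ d) (hM : 1 ≤ M)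
    (η β : ℝ) (hη : 0 < η) (hβ : 0 < β)
    (F : EuclideanSpace ℝ (Fin d) → EuclideanSpace ℝ (Fin d))
    (L_F m b : ℝ) (hm : 0 < m) (hb : 0 < b)
    (hF_lip : ∀ x y : EuclideanSpace ℝ (Fin d), ‖F x - F y‖ ≤ L_F * ‖x - y‖)
    (hF0 : F 0 = 0)
    (hdiss : ∀ x : EuclideanSpace ℝ (Fin d), ⟪F x, x⟫_ℝ ≥ m * ‖x‖ ^ 2 - b)
    (Θ : Fin M → EuclideanSpace ℝ (Fin d)) :
    ∑ i : Fin M,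
      ⟪β⁻¹ • F (Θ i)
          + (M : ℝ)⁻¹ • ∑ j : Fin M,
              Real.exp (-‖Θ i - Θ j‖ ^ 2 / η ^ 2) • F (Θ j)
          - (M : ℝ)⁻¹ • ∑ j : Fin M,
              (-(2 / η ^ 2 * Real.exp (-‖Θ i - Θ j‖ ^ 2 / η ^ 2))) • (Θ i - Θ j),
        Θ i⟫_ℝ
      ≥ (β⁻¹ * m - L_F - 4 / η ^ 2) * (∑ i : Fin M, ‖Θ i‖ ^ 2) - β⁻¹ * M * b := by
  have hM0 : (0:ℝ) < M := by exact_mod_cast hM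
  set S : ℝ := ∑ i : Fin M, ‖Θ i‖ ^ 2 with hSdef
  set A : ℝ := ∑ i : Fin M, ‖Θ i‖ with hAdef
  have hA0 : 0 ≤ A := Finset.sum_nonneg fun i _ => norm_nonneg _
  have hS0 : 0 ≤ S := Finset.sum_nonneg fun i _ => sq_nonneg _
  have hA2 : A ^ 2 ≤ M * S := by
    have := sq_sum_le_card_mul_sum_sq (s := (Finset.univ : Finset (Fin M)))
      (f := fun i => ‖Θ i‖)
    simpa [hAdef, hSdef] using this
  have hLF : 0 ≤ L_F := by
    have h1 := hF_lip (EuclideanSpace.single (⟨0, hd⟩ : Fin d) (1:ℝ)) 0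
    rw [hF0, sub_zero, sub_zero] at h1
    have h2 : ‖EuclideanSpace.single (⟨0, hd⟩ : Fin d) (1:ℝ)‖ = 1 := by
      simp [EuclideanSpace.norm_single]
    rw [h2, mul_one] at h1
    exact le_trans (norm_nonneg _) h1
  have hFn : ∀ x : EuclideanSpace ℝ (Fin d), ‖F x‖ ≤ L_F * ‖x‖ := fun x => by
    simpa [hF0] using hF_lip x 0
  have hK0 : ∀ i j : Fin M, 0 ≤ Real.exp (-‖Θ i - Θ j‖ ^ 2 / η ^ 2) :=
    fun i j => (Real.exp_pos _).le
  have hK1 : ∀ i j : Fin M, Real.exp (-‖Θ i - Θ j‖ ^ 2 / η ^ 2) ≤ 1 := by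
    intro i j
    rw [Real.exp_le_one_iff]
    apply div_nonpos_of_nonpos_of_nonneg
    · simp [sq_nonneg]
    · positivity
  -- expand the inner products
  have hexp : ∀ i : Fin M,
      ⟪β⁻¹ • F (Θ i)
          + (M : ℝ)⁻¹ • ∑ j : Fin M,
              Real.exp (-‖Θ i - Θ j‖ ^ 2 / η ^ 2) • F (Θ j)
          - (M : ℝ)⁻¹ • ∑ j : Fin M,
              (-(2 / η ^ 2 * Real.exp (-‖Θ i - Θ j‖ ^ 2 / η ^ 2))) • (Θ i - Θ j),
        Θ i⟫_ℝ
      = β⁻¹ * ⟪F (Θ i), Θ i⟫_ℝ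
        + (M : ℝ)⁻¹ * ∑ j : Fin M,
            Real.exp (-‖Θ i - Θ j‖ ^ 2 / η ^ 2) * ⟪F (Θ j), Θ i⟫_ℝ
        - (M : ℝ)⁻¹ * ∑ j : Fin M,
            (-(2 / η ^ 2 * Real.exp (-‖Θ i - Θ j‖ ^ 2 / η ^ 2))) * ⟪Θ i - Θ j, Θ i⟫_ℝ := by
    intro i
    rw [inner_sub_left, inner_add_left, real_inner_smul_left, real_inner_smul_left,
      real_inner_smul_left, sum_inner, sum_inner]
    simp only [real_inner_smul_left]
  simp only [hexp]
  rw [Finset.sum_sub_distrib, Finset.sum_add_distrib]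
  -- term 1
  have h1 : ∑ i : Fin M, β⁻¹ * ⟪F (Θ i), Θ i⟫_ℝ ≥ β⁻¹ * m * S - β⁻¹ * M * b := by
    have hle : ∑ i : Fin M, β⁻¹ * (m * ‖Θ i‖ ^ 2 - b)
        ≤ ∑ i : Fin M, β⁻¹ * ⟪F (Θ i), Θ i⟫_ℝ :=
      Finset.sum_le_sum fun i _ =>
        mul_le_mul_of_nonneg_left (hdiss (Θ i)) (inv_nonneg.mpr hβ.le)
    have heq : ∑ i : Fin M, β⁻¹ * (m * ‖Θ i‖ ^ 2 - b)
        = β⁻¹ * m * S - β⁻¹ * M * b := by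
      calc ∑ i : Fin M, β⁻¹ * (m * ‖Θ i‖ ^ 2 - b)
          = ∑ i : Fin M, (β⁻¹ * m * ‖Θ i‖ ^ 2 - β⁻¹ * b) :=
            Finset.sum_congr rfl fun i _ => by ring
        _ = β⁻¹ * m * S - β⁻¹ * M * b := by
            rw [Finset.sum_sub_distrib, ← Finset.mul_sum, ← hSdef,
              Finset.sum_const, Finset.card_univ, Fintype.card_fin, nsmul_eq_mul]
            ring
    linarith [heq ▸ hle]
  -- term 2
  have h2 : ∑ i : Fin M, (M : ℝ)⁻¹ * ∑ j : Fin M,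
      Real.exp (-‖Θ i - Θ j‖ ^ 2 / η ^ 2) * ⟪F (Θ j), Θ i⟫_ℝ ≥ -(L_F * S) := by
    have step : ∀ i : Fin M,
        -((M : ℝ)⁻¹ * (L_F * ‖Θ i‖ * A)) ≤ (M : ℝ)⁻¹ * ∑ j : Fin M,
          Real.exp (-‖Θ i - Θ j‖ ^ 2 / η ^ 2) * ⟪F (Θ j), Θ i⟫_ℝ := by
      intro i
      rw [← mul_neg]
      apply mul_le_mul_of_nonneg_left _ (inv_nonneg.mpr hM0.le)
      have e : ∑ j : Fin M, -(L_F * (‖Θ i‖ * ‖Θ j‖)) = -(L_F * ‖Θ i‖ * A) := by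
        calc ∑ j : Fin M, -(L_F * (‖Θ i‖ * ‖Θ j‖))
            = ∑ j : Fin M, (-(L_F * ‖Θ i‖)) * ‖Θ j‖ :=
              Finset.sum_congr rfl fun j _ => by ring
          _ = -(L_F * ‖Θ i‖ * A) := by rw [← Finset.mul_sum, ← hAdef]; ring
      rw [← e]
      apply Finset.sum_le_sum
      intro j _
      apply kmul_ge_aux _ _ _ (hK0 i j) (hK1 i j)
      calc |⟪F (Θ j), Θ i⟫_ℝ| ≤ ‖F (Θ j)‖ * ‖Θ i‖ := abs_real_inner_le_norm _ _
        _ ≤ (L_F * ‖Θ j‖) * ‖Θ i‖ :=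
            mul_le_mul_of_nonneg_right (hFn (Θ j)) (norm_nonneg _)
        _ = L_F * (‖Θ i‖ * ‖Θ j‖) := by ring
    have hsum : ∑ i : Fin M, -((M : ℝ)⁻¹ * (L_F * ‖Θ i‖ * A))
        = -((M : ℝ)⁻¹ * (L_F * A ^ 2)) := by
      calc ∑ i : Fin M, -((M : ℝ)⁻¹ * (L_F * ‖Θ i‖ * A))
          = ∑ i : Fin M, (-((M : ℝ)⁻¹ * (L_F * A))) * ‖Θ i‖ :=
            Finset.sum_congr rfl fun i _ => by ring
        _ = -((M : ℝ)⁻¹ * (L_F * A ^ 2)) := by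
            rw [← Finset.mul_sum, ← hAdef]; ring
    have hmain : -((M : ℝ)⁻¹ * (L_F * A ^ 2)) ≥ -(L_F * S) := by
      have h := mul_le_mul_of_nonneg_left
        (mul_le_mul_of_nonneg_left hA2 hLF) (inv_nonneg.mpr hM0.le)
      have heq : (M : ℝ)⁻¹ * (L_F * ((M : ℝ) * S)) = L_F * S := by
        field_simp
      linarith
    calc ∑ i : Fin M, (M : ℝ)⁻¹ * ∑ j : Fin M,
          Real.exp (-‖Θ i - Θ j‖ ^ 2 / η ^ 2) * ⟪F (Θ j), Θ i⟫_ℝ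
        ≥ ∑ i : Fin M, -((M : ℝ)⁻¹ * (L_F * ‖Θ i‖ * A)) :=
          Finset.sum_le_sum fun i _ => step i
      _ = -((M : ℝ)⁻¹ * (L_F * A ^ 2)) := hsum
      _ ≥ -(L_F * S) := hmain
  -- term 3
  have h3 : ∑ i : Fin M, (M : ℝ)⁻¹ * ∑ j : Fin M,
      (-(2 / η ^ 2 * Real.exp (-‖Θ i - Θ j‖ ^ 2 / η ^ 2))) * ⟪Θ i - Θ j, Θ i⟫_ℝ
      ≤ 4 / η ^ 2 * S := by
    have hc0 : 0 ≤ 2 / η ^ 2 := by positivity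
    have step : ∀ i : Fin M,
        (M : ℝ)⁻¹ * ∑ j : Fin M,
          (-(2 / η ^ 2 * Real.exp (-‖Θ i - Θ j‖ ^ 2 / η ^ 2))) * ⟪Θ i - Θ j, Θ i⟫_ℝ
        ≤ (M : ℝ)⁻¹ * (2 / η ^ 2 * ((M : ℝ) * ‖Θ i‖ ^ 2 + ‖Θ i‖ * A)) := by
      intro i
      apply mul_le_mul_of_nonneg_left _ (inv_nonneg.mpr hM0.le)
      have e : ∑ j : Fin M, 2 / η ^ 2 * ((‖Θ i‖ + ‖Θ j‖) * ‖Θ i‖)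
          = 2 / η ^ 2 * ((M : ℝ) * ‖Θ i‖ ^ 2 + ‖Θ i‖ * A) := by
        calc ∑ j : Fin M, 2 / η ^ 2 * ((‖Θ i‖ + ‖Θ j‖) * ‖Θ i‖)
            = ∑ j : Fin M, (2 / η ^ 2 * ‖Θ i‖ ^ 2 + (2 / η ^ 2 * ‖Θ i‖) * ‖Θ j‖) :=
              Finset.sum_congr rfl fun j _ => by ring
          _ = 2 / η ^ 2 * ((M : ℝ) * ‖Θ i‖ ^ 2 + ‖Θ i‖ * A) := by
              rw [Finset.sum_add_distrib, Finset.sum_const, Finset.card_univ,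
                Fintype.card_fin, nsmul_eq_mul, ← Finset.mul_sum, ← hAdef]
              ring
      rw [← e]
      apply Finset.sum_le_sum
      intro j _
      have habs : |⟪Θ i - Θ j, Θ i⟫_ℝ| ≤ (‖Θ i‖ + ‖Θ j‖) * ‖Θ i‖ := by
        calc |⟪Θ i - Θ j, Θ i⟫_ℝ| ≤ ‖Θ i - Θ j‖ * ‖Θ i‖ := abs_real_inner_le_norm _ _
          _ ≤ (‖Θ i‖ + ‖Θ j‖) * ‖Θ i‖ :=
              mul_le_mul_of_nonneg_right (norm_sub_le _ _) (norm_nonneg _)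
      have hk := kmul_ge_aux _ _ _ (hK0 i j) (hK1 i j) habs
      nlinarith [hk]
    have hsum : ∑ i : Fin M, (M : ℝ)⁻¹ * (2 / η ^ 2 * ((M : ℝ) * ‖Θ i‖ ^ 2 + ‖Θ i‖ * A))
        = (M : ℝ)⁻¹ * (2 / η ^ 2) * ((M : ℝ) * S + A ^ 2) := by
      calc ∑ i : Fin M, (M : ℝ)⁻¹ * (2 / η ^ 2 * ((M : ℝ) * ‖Θ i‖ ^ 2 + ‖Θ i‖ * A))
          = ∑ i : Fin M, (((M : ℝ)⁻¹ * (2 / η ^ 2) * (M : ℝ)) * ‖Θ i‖ ^ 2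
              + ((M : ℝ)⁻¹ * (2 / η ^ 2) * A) * ‖Θ i‖) :=
            Finset.sum_congr rfl fun i _ => by ring
        _ = (M : ℝ)⁻¹ * (2 / η ^ 2) * ((M : ℝ) * S + A ^ 2) := by
            rw [Finset.sum_add_distrib, ← Finset.mul_sum, ← Finset.mul_sum,
              ← hSdef, ← hAdef]
            ring
    have hmain : (M : ℝ)⁻¹ * (2 / η ^ 2) * ((M : ℝ) * S + A ^ 2) ≤ 4 / η ^ 2 * S := by
      have h : (M : ℝ) * S + A ^ 2 ≤ 2 * ((M : ℝ) * S) := by linarith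
      have := mul_le_mul_of_nonneg_left h (by positivity : (0:ℝ) ≤ (M : ℝ)⁻¹ * (2 / η ^ 2))
      have heq : (M : ℝ)⁻¹ * (2 / η ^ 2) * (2 * ((M : ℝ) * S)) = 4 / η ^ 2 * S := by
        field_simp; ring
      linarith
    calc ∑ i : Fin M, (M : ℝ)⁻¹ * ∑ j : Fin M,
          (-(2 / η ^ 2 * Real.exp (-‖Θ i - Θ j‖ ^ 2 / η ^ 2))) * ⟪Θ i - Θ j, Θ i⟫_ℝ
        ≤ ∑ i : Fin M, (M : ℝ)⁻¹ * (2 / η ^ 2 * ((M : ℝ) * ‖Θ i‖ ^ 2 + ‖Θ i‖ * A)) :=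
          Finset.sum_le_sum fun i _ => step i
      _ = (M : ℝ)⁻¹ * (2 / η ^ 2) * ((M : ℝ) * S + A ^ 2) := hsum
      _ ≤ 4 / η ^ 2 * S := hmain
  have hring : (β⁻¹ * m - L_F - 4 / η ^ 2) * S
      = β⁻¹ * m * S - L_F * S - 4 / η ^ 2 * S := by ring
  rw [hring]
  linarith
end

section
/- Assume F is L_F-Lipschitz with F(0) = 0. Then the concatenated SPOS drift satisfies ‖F_Θ(Θ)‖² ≤ (3·β⁻²·L_F² + 3·L_F² + 48/η⁴)·‖Θ‖² for every Θ ∈ (ℝ^d)^M. -/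
open Finset

set_option maxHeartbeats 1600000 in
/-- Lemma H.2: if `F` is `L_F`-Lipschitz with `F 0 = 0`, then the
concatenated SPOS drift with the Gaussian kernel satisfies
`‖F_Θ(Θ)‖² ≤ (3β⁻²L_F² + 3L_F² + 48/η⁴)‖Θ‖²` (ℓ² product norm as sums). -/
theorem spos_concatenated_drift_growth
    (d M : ℕ) (hd : 1 ≤ d) (hM : 1 ≤ M)
    (η β : ℝ) (hη : 0 < η) (hβ : 0 < β)
    (F : EuclideanSpace ℝ (Fin d) → EuclideanSpace ℝ (Fin d))
    (L_F : ℝ)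
    (hF_lip : ∀ x y : EuclideanSpace ℝ (Fin d), ‖F x - F y‖ ≤ L_F * ‖x - y‖)
    (hF0 : F 0 = 0)
    (Θ : Fin M → EuclideanSpace ℝ (Fin d)) :
    ∑ i : Fin M,
      ‖β⁻¹ • F (Θ i)
          + (M : ℝ)⁻¹ • ∑ j : Fin M,
              Real.exp (-‖Θ i - Θ j‖ ^ 2 / η ^ 2) • F (Θ j)
          - (M : ℝ)⁻¹ • ∑ j : Fin M,
              (-(2 / η ^ 2 * Real.exp (-‖Θ i - Θ j‖ ^ 2 / η ^ 2))) • (Θ i - Θ j)‖ ^ 2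
      ≤ (3 * β⁻¹ ^ 2 * L_F ^ 2 + 3 * L_F ^ 2 + 48 / η ^ 4) *
          ∑ i : Fin M, ‖Θ i‖ ^ 2 := by
  have hMpos : (0:ℝ) < M := by exact_mod_cast hM
  have hFn : ∀ x, ‖F x‖ ≤ L_F * ‖x‖ := fun x => by simpa [hF0] using hF_lip x 0
  have hL : 0 ≤ L_F := by
    have h := hFn (EuclideanSpace.single (⟨0, hd⟩ : Fin d) (1:ℝ))
    rw [EuclideanSpace.norm_single] at h
    simpa using (norm_nonneg _).trans h
  set e : ℝ := 2 / η ^ 2 with he_def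
  have he : 0 ≤ e := by positivity
  set S : ℝ := ∑ i : Fin M, ‖Θ i‖ ^ 2 with hS_def
  set T : ℝ := ∑ i : Fin M, ‖Θ i‖ with hT_def
  have hT : 0 ≤ T := Finset.sum_nonneg fun _ _ => norm_nonneg _
  have hTS : ((M:ℝ)⁻¹ * T) ^ 2 ≤ (M:ℝ)⁻¹ * S := by
    have h := sq_sum_le_card_mul_sum_sq (s := Finset.univ) (f := fun i => ‖Θ i‖)
    simp only [Finset.card_univ, Fintype.card_fin] at h
    have : T ^ 2 ≤ M * S := by exact_mod_cast h
    rw [mul_pow]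
    calc (M:ℝ)⁻¹ ^ 2 * T ^ 2 ≤ (M:ℝ)⁻¹ ^ 2 * (M * S) := by
          apply mul_le_mul_of_nonneg_left this (by positivity)
      _ = (M:ℝ)⁻¹ * S := by field_simp
  have hexp : ∀ i j : Fin M, Real.exp (-‖Θ i - Θ j‖ ^ 2 / η ^ 2) ≤ 1 := by
    intro i j
    apply Real.exp_le_one_iff.mpr
    exact div_nonpos_of_nonpos_of_nonneg (neg_nonpos.mpr (by positivity)) (by positivity)
  have key : ∀ i : Fin M,
      ‖β⁻¹ • F (Θ i)
          + (M : ℝ)⁻¹ • ∑ j : Fin M,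
              Real.exp (-‖Θ i - Θ j‖ ^ 2 / η ^ 2) • F (Θ j)
          - (M : ℝ)⁻¹ • ∑ j : Fin M,
              (-(2 / η ^ 2 * Real.exp (-‖Θ i - Θ j‖ ^ 2 / η ^ 2))) • (Θ i - Θ j)‖ ^ 2
      ≤ 3 * β⁻¹ ^ 2 * L_F ^ 2 * ‖Θ i‖ ^ 2 + 3 * L_F ^ 2 * ((M:ℝ)⁻¹ * S)
        + 6 * e ^ 2 * ‖Θ i‖ ^ 2 + 6 * e ^ 2 * ((M:ℝ)⁻¹ * S) := by
    intro i
    set A : ℝ := β⁻¹ * (L_F * ‖Θ i‖) with hA_def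
    set B : ℝ := (M:ℝ)⁻¹ * (L_F * T) with hB_def
    set C : ℝ := e * (‖Θ i‖ + (M:ℝ)⁻¹ * T) with hC_def
    have ha : ‖β⁻¹ • F (Θ i)‖ ≤ A := by
      rw [norm_smul, Real.norm_eq_abs, abs_of_pos (by positivity)]
      exact mul_le_mul_of_nonneg_left (hFn _) (by positivity)
    have hb : ‖(M : ℝ)⁻¹ • ∑ j : Fin M,
        Real.exp (-‖Θ i - Θ j‖ ^ 2 / η ^ 2) • F (Θ j)‖ ≤ B := by
      rw [norm_smul, Real.norm_eq_abs, abs_of_pos (by positivity)]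
      apply mul_le_mul_of_nonneg_left _ (by positivity : (0:ℝ) ≤ (M:ℝ)⁻¹)
      calc ‖∑ j : Fin M, Real.exp (-‖Θ i - Θ j‖ ^ 2 / η ^ 2) • F (Θ j)‖
          ≤ ∑ j : Fin M, ‖Real.exp (-‖Θ i - Θ j‖ ^ 2 / η ^ 2) • F (Θ j)‖ :=
            norm_sum_le _ _
        _ ≤ ∑ j : Fin M, L_F * ‖Θ j‖ := by
            apply Finset.sum_le_sum
            intro j _
            rw [norm_smul, Real.norm_eq_abs, abs_of_pos (Real.exp_pos _)]
            calc Real.exp (-‖Θ i - Θ j‖ ^ 2 / η ^ 2) * ‖F (Θ j)‖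
                ≤ 1 * (L_F * ‖Θ j‖) :=
                  mul_le_mul (hexp i j) (hFn _) (norm_nonneg _) zero_le_one
              _ = L_F * ‖Θ j‖ := one_mul _
        _ = L_F * T := by rw [hT_def, Finset.mul_sum]
      
    have hc : ‖(M : ℝ)⁻¹ • ∑ j : Fin M,
        (-(2 / η ^ 2 * Real.exp (-‖Θ i - Θ j‖ ^ 2 / η ^ 2))) • (Θ i - Θ j)‖ ≤ C := by
      rw [norm_smul, Real.norm_eq_abs, abs_of_pos (by positivity)]
      have : ‖∑ j : Fin M,
          (-(2 / η ^ 2 * Real.exp (-‖Θ i - Θ j‖ ^ 2 / η ^ 2))) • (Θ i - Θ j)‖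
          ≤ ∑ j : Fin M, e * (‖Θ i‖ + ‖Θ j‖) := by
        refine (norm_sum_le _ _).trans (Finset.sum_le_sum fun j _ => ?_)
        rw [norm_smul, Real.norm_eq_abs, abs_neg, abs_of_pos (by positivity)]
        have h1 : 2 / η ^ 2 * Real.exp (-‖Θ i - Θ j‖ ^ 2 / η ^ 2) ≤ e := by
          rw [he_def]
          calc 2 / η ^ 2 * Real.exp (-‖Θ i - Θ j‖ ^ 2 / η ^ 2) ≤ 2 / η ^ 2 * 1 :=
            mul_le_mul_of_nonneg_left (hexp i j) (by positivity)
            _ = 2 / η ^ 2 := mul_one _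
        have h2 : ‖Θ i - Θ j‖ ≤ ‖Θ i‖ + ‖Θ j‖ := norm_sub_le _ _
        exact mul_le_mul h1 h2 (norm_nonneg _) he
      calc (M:ℝ)⁻¹ * ‖∑ j : Fin M,
            (-(2 / η ^ 2 * Real.exp (-‖Θ i - Θ j‖ ^ 2 / η ^ 2))) • (Θ i - Θ j)‖
          ≤ (M:ℝ)⁻¹ * ∑ j : Fin M, e * (‖Θ i‖ + ‖Θ j‖) :=
            mul_le_mul_of_nonneg_left this (by positivity)
        _ = C := by
            have hsum : ∑ j : Fin M, e * (‖Θ i‖ + ‖Θ j‖)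
                = (M:ℝ) * (e * ‖Θ i‖) + e * T := by
              rw [hT_def]
              simp [mul_add, Finset.sum_add_distrib, Finset.sum_const,
                Finset.card_univ, Fintype.card_fin, ← Finset.mul_sum, nsmul_eq_mul]
            rw [hsum, hC_def]
            field_simp
    have hABC : ‖β⁻¹ • F (Θ i)
          + (M : ℝ)⁻¹ • ∑ j : Fin M,
              Real.exp (-‖Θ i - Θ j‖ ^ 2 / η ^ 2) • F (Θ j)
          - (M : ℝ)⁻¹ • ∑ j : Fin M,
              (-(2 / η ^ 2 * Real.exp (-‖Θ i - Θ j‖ ^ 2 / η ^ 2))) • (Θ i - Θ j)‖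
        ≤ A + B + C := by
      refine (norm_sub_le _ _).trans ?_
      exact add_le_add ((norm_add_le _ _).trans (add_le_add ha hb)) hc
    have hsq : ‖β⁻¹ • F (Θ i)
          + (M : ℝ)⁻¹ • ∑ j : Fin M,
              Real.exp (-‖Θ i - Θ j‖ ^ 2 / η ^ 2) • F (Θ j)
          - (M : ℝ)⁻¹ • ∑ j : Fin M,
              (-(2 / η ^ 2 * Real.exp (-‖Θ i - Θ j‖ ^ 2 / η ^ 2))) • (Θ i - Θ j)‖ ^ 2
        ≤ (A + B + C) ^ 2 := pow_le_pow_left₀ (norm_nonneg _) hABC 2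
    refine hsq.trans ?_
    have h1 : (A + B + C) ^ 2 ≤ 3 * A ^ 2 + 3 * B ^ 2 + 3 * C ^ 2 := by
      nlinarith [sq_nonneg (A - B), sq_nonneg (A - C), sq_nonneg (B - C)]
    have h2 : A ^ 2 = β⁻¹ ^ 2 * L_F ^ 2 * ‖Θ i‖ ^ 2 := by rw [hA_def]; ring
    have h3 : B ^ 2 ≤ L_F ^ 2 * ((M:ℝ)⁻¹ * S) := by
      have hB2 : B ^ 2 = L_F ^ 2 * ((M:ℝ)⁻¹ * T) ^ 2 := by rw [hB_def]; ring
      rw [hB2]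
      exact mul_le_mul_of_nonneg_left hTS (sq_nonneg _)
    have h4 : C ^ 2 ≤ 2 * e ^ 2 * ‖Θ i‖ ^ 2 + 2 * e ^ 2 * ((M:ℝ)⁻¹ * S) := by
      have hC2 : C ^ 2 = e ^ 2 * (‖Θ i‖ + (M:ℝ)⁻¹ * T) ^ 2 := by rw [hC_def]; ring
      have hut : (‖Θ i‖ + (M:ℝ)⁻¹ * T) ^ 2
          ≤ 2 * ‖Θ i‖ ^ 2 + 2 * ((M:ℝ)⁻¹ * S) := by
        nlinarith [sq_nonneg (‖Θ i‖ - (M:ℝ)⁻¹ * T), hTS]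
      calc C ^ 2 = e ^ 2 * (‖Θ i‖ + (M:ℝ)⁻¹ * T) ^ 2 := hC2
        _ ≤ e ^ 2 * (2 * ‖Θ i‖ ^ 2 + 2 * ((M:ℝ)⁻¹ * S)) :=
            mul_le_mul_of_nonneg_left hut (sq_nonneg _)
        _ = 2 * e ^ 2 * ‖Θ i‖ ^ 2 + 2 * e ^ 2 * ((M:ℝ)⁻¹ * S) := by ring
    linarith
  calc ∑ i : Fin M, ‖β⁻¹ • F (Θ i)
          + (M : ℝ)⁻¹ • ∑ j : Fin M,
              Real.exp (-‖Θ i - Θ j‖ ^ 2 / η ^ 2) • F (Θ j)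
          - (M : ℝ)⁻¹ • ∑ j : Fin M,
              (-(2 / η ^ 2 * Real.exp (-‖Θ i - Θ j‖ ^ 2 / η ^ 2))) • (Θ i - Θ j)‖ ^ 2
      ≤ ∑ i : Fin M, (3 * β⁻¹ ^ 2 * L_F ^ 2 * ‖Θ i‖ ^ 2 + 3 * L_F ^ 2 * ((M:ℝ)⁻¹ * S)
        + 6 * e ^ 2 * ‖Θ i‖ ^ 2 + 6 * e ^ 2 * ((M:ℝ)⁻¹ * S)) :=
        Finset.sum_le_sum fun i _ => key i
    _ = (3 * β⁻¹ ^ 2 * L_F ^ 2 + 3 * L_F ^ 2 + 48 / η ^ 4) * S := by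
        simp only [Finset.sum_add_distrib, ← Finset.mul_sum, Finset.sum_const,
          Finset.card_univ, Fintype.card_fin, nsmul_eq_mul]
        rw [← hS_def, he_def]
        have hMne : (M:ℝ) ≠ 0 := ne_of_gt hMpos
        field_simp
        ring
end

section
/- Let H be a real inner product space, let G : H → H be L-Lipschitz, and let x_1, …, x_M, y_1, …, y_M ∈ H. Then Σ_{i=1}^M ‖(1/M) Σ_{j=1}^M (G(x_i − x_j) − G(y_i − y_j))‖² ≤ 4·L²·Σ_{i=1}^M ‖x_i − y_i‖². -/
open Finset

/-- ω⁴ bound in Lemma E.2: for `L`-Lipschitz `G` on a real inner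
product space, `Σ_i ‖(1/M) Σ_j (G(x_i−x_j) − G(y_i−y_j))‖² ≤ 4L² Σ_i ‖x_i−y_i‖²`. -/
theorem interaction_term_bound
    {H : Type*} [NormedAddCommGroup H] [InnerProductSpace ℝ H]
    (M : ℕ) (L : NNReal) (G : H → H) (hG : LipschitzWith L G)
    (x y : Fin M → H) :
    ∑ i : Fin M, ‖(M : ℝ)⁻¹ • ∑ j : Fin M, (G (x i - x j) - G (y i - y j))‖ ^ 2
      ≤ 4 * (L : ℝ) ^ 2 * ∑ i : Fin M, ‖x i - y i‖ ^ 2 := by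
  rcases Nat.eq_zero_or_pos M with hM | hM
  · subst hM
    simp
  have hMpos : (0:ℝ) < (M:ℝ) := by exact_mod_cast hM
  set a : Fin M → ℝ := fun i => ‖x i - y i‖ with ha
  have key : ∀ i : Fin M,
      ‖(M : ℝ)⁻¹ • ∑ j : Fin M, (G (x i - x j) - G (y i - y j))‖ ^ 2
        ≤ (M:ℝ)⁻¹ * ∑ j : Fin M, 2 * (L:ℝ)^2 * (a i ^ 2 + a j ^ 2) := by
    intro i
    have h1 : ‖∑ j : Fin M, (G (x i - x j) - G (y i - y j))‖
        ≤ ∑ j : Fin M, ‖G (x i - x j) - G (y i - y j)‖ := norm_sum_le _ _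
    have h2 : (∑ j : Fin M, ‖G (x i - x j) - G (y i - y j)‖) ^ 2
        ≤ (M:ℝ) * ∑ j : Fin M, ‖G (x i - x j) - G (y i - y j)‖ ^ 2 := by
      simpa using sq_sum_le_card_mul_sum_sq
        (s := Finset.univ) (f := fun j => ‖G (x i - x j) - G (y i - y j)‖)
    have h3 : ∀ j : Fin M, ‖G (x i - x j) - G (y i - y j)‖ ^ 2
        ≤ 2 * (L:ℝ)^2 * (a i ^ 2 + a j ^ 2) := by
      intro j
      have hL : ‖G (x i - x j) - G (y i - y j)‖ ≤ (L:ℝ) * (a i + a j) := by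
        have hd := hG.dist_le_mul (x i - x j) (y i - y j)
        simp only [dist_eq_norm] at hd
        refine hd.trans ?_
        have hsub : (x i - x j) - (y i - y j) = (x i - y i) - (x j - y j) := by abel
        have hn : ‖(x i - x j) - (y i - y j)‖ ≤ a i + a j := by
          rw [hsub]; exact norm_sub_le _ _
        exact mul_le_mul_of_nonneg_left hn L.coe_nonneg
      calc ‖G (x i - x j) - G (y i - y j)‖ ^ 2 ≤ ((L:ℝ) * (a i + a j)) ^ 2 := by
            apply pow_le_pow_left₀ (norm_nonneg _) hL
        _ ≤ 2 * (L:ℝ)^2 * (a i ^ 2 + a j ^ 2) := by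
            have h := sq_nonneg (a i - a j)
            nlinarith [sq_nonneg ((L:ℝ))]
    calc ‖(M : ℝ)⁻¹ • ∑ j : Fin M, (G (x i - x j) - G (y i - y j))‖ ^ 2
        = (M:ℝ)⁻¹^2 * ‖∑ j : Fin M, (G (x i - x j) - G (y i - y j))‖ ^ 2 := by
          rw [norm_smul]; simp [mul_pow, abs_of_nonneg (inv_nonneg.2 hMpos.le)]
      _ ≤ (M:ℝ)⁻¹^2 * ((M:ℝ) * ∑ j : Fin M, ‖G (x i - x j) - G (y i - y j)‖ ^ 2) := by
          apply mul_le_mul_of_nonneg_left _ (by positivity)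
          calc ‖∑ j : Fin M, (G (x i - x j) - G (y i - y j))‖ ^ 2
              ≤ (∑ j : Fin M, ‖G (x i - x j) - G (y i - y j)‖) ^ 2 := by
                apply pow_le_pow_left₀ (norm_nonneg _) h1
            _ ≤ _ := h2
      _ = (M:ℝ)⁻¹ * ∑ j : Fin M, ‖G (x i - x j) - G (y i - y j)‖ ^ 2 := by
          field_simp
      _ ≤ (M:ℝ)⁻¹ * ∑ j : Fin M, 2 * (L:ℝ)^2 * (a i ^ 2 + a j ^ 2) := by
          apply mul_le_mul_of_nonneg_left _ (by positivity)
          exact Finset.sum_le_sum fun j _ => h3 j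
  calc ∑ i : Fin M, ‖(M : ℝ)⁻¹ • ∑ j : Fin M, (G (x i - x j) - G (y i - y j))‖ ^ 2
      ≤ ∑ i : Fin M, (M:ℝ)⁻¹ * ∑ j : Fin M, 2 * (L:ℝ)^2 * (a i ^ 2 + a j ^ 2) :=
        Finset.sum_le_sum fun i _ => key i
    _ = 4 * (L:ℝ)^2 * ∑ i : Fin M, a i ^ 2 := by
        have hS : ∀ i : Fin M, ∑ j : Fin M, 2*(L:ℝ)^2*(a i^2 + a j^2)
            = 2*(L:ℝ)^2*((M:ℝ) * a i^2 + ∑ j : Fin M, a j^2) := by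
          intro i
          rw [← Finset.mul_sum, Finset.sum_add_distrib, Finset.sum_const]
          simp [nsmul_eq_mul]
        simp only [hS]
        rw [← Finset.mul_sum]
        simp only [mul_add, Finset.sum_add_distrib, ← Finset.mul_sum, Finset.sum_const,
          Finset.card_univ, Fintype.card_fin, nsmul_eq_mul]
        field_simp
        ring
end

section
/- Let H be a real inner product space and let G : H → H be odd (G(−z) = −G(z)) and L-Lipschitz. Then for any x_1, …, x_M, y_1, …, y_M ∈ H: Σ_{i,j=1}^M ⟨G(x_i − x_j) − G(y_i − y_j), x_i − y_i⟩ ≤ 2·L·M·Σ_{i=1}^M ‖x_i − y_i‖². -/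
open Finset
open scoped InnerProductSpace

/-- B_{ij}/ξ²_{ij} bound: for an odd `L`-Lipschitz map `G` on a
real inner product space,
`Σ_{i,j} ⟨G(x_i−x_j) − G(y_i−y_j), x_i−y_i⟫ ≤ 2LM Σ_i ‖x_i−y_i‖²`. -/
theorem odd_lipschitz_pairwise_bound
    {H : Type*} [NormedAddCommGroup H] [InnerProductSpace ℝ H]
    (M : ℕ) (L : NNReal) (G : H → H)
    (hodd : ∀ z : H, G (-z) = -G z) (hG : LipschitzWith L G)
    (x y : Fin M → H) :
    ∑ i : Fin M, ∑ j : Fin M, ⟪G (x i - x j) - G (y i - y j), x i - y i⟫_ℝ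
      ≤ 2 * (L : ℝ) * M * ∑ i : Fin M, ‖x i - y i‖ ^ 2 := by
  set d : Fin M → H := fun i => x i - y i with hd
  have key : ∀ i j : Fin M,
      ⟪G (x i - x j) - G (y i - y j), x i - y i⟫_ℝ
        ≤ (L : ℝ) * ((3/2) * ‖d i‖ ^ 2 + (1/2) * ‖d j‖ ^ 2) := by
    intro i j
    have h1 : ⟪G (x i - x j) - G (y i - y j), x i - y i⟫_ℝ
        ≤ ‖G (x i - x j) - G (y i - y j)‖ * ‖x i - y i‖ :=
      real_inner_le_norm _ _
    have h2 : ‖G (x i - x j) - G (y i - y j)‖ ≤ (L : ℝ) * ‖d i - d j‖ := by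
      have := hG.dist_le_mul (x i - x j) (y i - y j)
      rw [dist_eq_norm, dist_eq_norm] at this
      have he : (x i - x j) - (y i - y j) = d i - d j := by simp [hd]; abel
      rwa [he] at this
    have h3 : ‖d i - d j‖ ≤ ‖d i‖ + ‖d j‖ := norm_sub_le _ _
    have hL : (0:ℝ) ≤ L := L.coe_nonneg
    have hdi : ‖x i - y i‖ = ‖d i‖ := rfl
    rw [hdi] at h1
    have h4 : ‖G (x i - x j) - G (y i - y j)‖ * ‖d i‖ ≤ ((L:ℝ) * (‖d i‖ + ‖d j‖)) * ‖d i‖ := by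
      have := h2.trans (by nlinarith [norm_nonneg (d i - d j)] : (L:ℝ) * ‖d i - d j‖ ≤ (L:ℝ) * (‖d i‖ + ‖d j‖))
      exact mul_le_mul_of_nonneg_right this (norm_nonneg _)
    nlinarith [sq_nonneg (‖d i‖ - ‖d j‖), norm_nonneg (d i), norm_nonneg (d j)]
  calc ∑ i : Fin M, ∑ j : Fin M, ⟪G (x i - x j) - G (y i - y j), x i - y i⟫_ℝ
      ≤ ∑ i : Fin M, ∑ j : Fin M, (L : ℝ) * ((3/2) * ‖d i‖ ^ 2 + (1/2) * ‖d j‖ ^ 2) := by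
        apply Finset.sum_le_sum; intro i _
        exact Finset.sum_le_sum fun j _ => key i j
    _ = 2 * (L : ℝ) * M * ∑ i : Fin M, ‖x i - y i‖ ^ 2 := by
        have : ∀ i : Fin M, ∑ j : Fin M, (L : ℝ) * ((3/2) * ‖d i‖ ^ 2 + (1/2) * ‖d j‖ ^ 2)
            = (L : ℝ) * ((M : ℝ) * ((3/2) * ‖d i‖ ^ 2) + (1/2) * ∑ j : Fin M, ‖d j‖ ^ 2) := by
          intro i
          rw [← Finset.mul_sum, Finset.sum_add_distrib, Finset.sum_const, Finset.card_univ,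
            Fintype.card_fin, ← Finset.mul_sum, nsmul_eq_mul]
        simp only [this, ← Finset.mul_sum, Finset.sum_add_distrib, Finset.sum_const,
          Finset.card_univ, Fintype.card_fin, nsmul_eq_mul]
        ring
end
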